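/- The Killing form κ := tr₃(θ_L ∘ ℓ ∘ (id_L ⊗ ℓ)) of a Lie algebra (L, ℓ) in an additive symmetric ribbon category is symmetric: κ = κ ∘ c_{L,L}. -/

import Mathlib

open CategoryTheory MonoidalCategory

variable {C : Type*} [Category C] [MonoidalCategory C] [Preadditive C]
  [SymmetricCategory C] [MonoidalPreadditive C] [RigidCategory C]

/-- The sovereign structure `σ_U : U^∨ ⟶ ^∨U` induced by a twist `θ`. -/
def sovereignOfTwist (θ : ∀ X : C, X ⟶ X) (U : C) : Uᘁ ⟶ ᘁU :=
  (ρ_ (Uᘁ)).inv ≫ ((Uᘁ) ◁ η_ (ᘁU) U) ≫ (α_ (Uᘁ) (ᘁU) U).inv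
    ≫ ((β_ (ᘁU) (Uᘁ)).inv ▷ U) ≫ (α_ (ᘁU) (Uᘁ) U).hom
    ≫ ((ᘁU) ◁ ((Uᘁ) ◁ θ U)) ≫ ((ᘁU) ◁ ε_ U (Uᘁ)) ≫ (ρ_ (ᘁU)).hom

/-- Partial trace over the last tensor factor of `f : X ⊗ V ⟶ V`. -/
def partialTrace (θ : ∀ X : C, X ⟶ X) {X V : C} (f : X ⊗ V ⟶ V) : X ⟶ 𝟙_ C :=
  (ρ_ X).inv ≫ (X ◁ η_ V (Vᘁ)) ≫ (α_ X V (Vᘁ)).inv ≫ (f ▷ (Vᘁ))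
    ≫ (V ◁ sovereignOfTwist θ V) ≫ ε_ (ᘁV) V

/-- The Killing form `κ := tr₃(θ_L ∘ ℓ ∘ (id_L ⊗ ℓ)) : L ⊗ L ⟶ 𝟙` of a Lie algebra
`(L, ℓ)` in a symmetric ribbon category. -/
def catKillingForm (θ : ∀ X : C, X ⟶ X) {L : C} (ℓ : L ⊗ L ⟶ L) : L ⊗ L ⟶ 𝟙_ C :=
  partialTrace θ ((α_ L L L).hom ≫ (L ◁ ℓ) ≫ ℓ ≫ θ L)

section KillingAux

open BraidedCategory

lemma ev_reconstruct {X : C} (k : X ⟶ X) :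
    (λ_ X).inv ≫ (η_ X (Xᘁ) ▷ X) ≫ (α_ X (Xᘁ) X).hom ≫ (X ◁ (((Xᘁ) ◁ k) ≫ ε_ X (Xᘁ))) ≫ (ρ_ X).hom = k := by
  calc
    _ = 𝟙 _ ⊗≫ (η_ X (Xᘁ) ▷ X ≫ (X ⊗ Xᘁ) ◁ k) ⊗≫ X ◁ ε_ X (Xᘁ) ⊗≫ 𝟙 _ := by
      monoidal
    _ = k ⊗≫ (η_ X (Xᘁ) ▷ X ⊗≫ X ◁ ε_ X (Xᘁ)) ⊗≫ 𝟙 _ := by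
      rw [← whisker_exchange]; monoidal
    _ = k := by
      rw [ExactPairing.evaluation_coevaluation'']; monoidal

lemma theta_sq (θ : ∀ X : C, X ⟶ X)
    (hθnat : ∀ {X Y : C} (g : X ⟶ Y), g ≫ θ Y = θ X ≫ g)
    (hθone : θ (𝟙_ C) = 𝟙 (𝟙_ C))
    (hθtensor : ∀ X Y : C, θ (X ⊗ Y) = (β_ X Y).hom ≫ (β_ Y X).hom ≫ (θ X ⊗ₘ θ Y))
    (hθdual : ∀ X : C, θ (Xᘁ) = (θ X)ᘁ)
    (X : C) : θ X ≫ θ X = 𝟙 X := by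
  have h1 : ((θ (Xᘁ) ⊗ₘ θ X)) ≫ ε_ X (Xᘁ) = ε_ X (Xᘁ) := by
    have := hθnat (ε_ X (Xᘁ))
    rw [hθone, Category.comp_id, hθtensor] at this
    simp only [Category.assoc, SymmetricCategory.symmetry_assoc] at this
    exact this.symm
  have h2 : ((Xᘁ) ◁ (θ X ≫ θ X)) ≫ ε_ X (Xᘁ) = ((Xᘁ) ◁ (𝟙 X)) ≫ ε_ X (Xᘁ) := by
    rw [MonoidalCategory.whiskerLeft_comp, MonoidalCategory.whiskerLeft_id, Category.assoc,
      Category.id_comp]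
    nth_rewrite 2 [← h1]
    rw [tensorHom_def', Category.assoc, hθdual, rightAdjointMate_comp_evaluation]
  rw [← ev_reconstruct (θ X ≫ θ X), h2, ev_reconstruct]

lemma coev_slide (V : C) :
    (ρ_ (Vᘁ)).inv ≫ ((Vᘁ) ◁ η_ (ᘁV) V) ≫ (α_ (Vᘁ) (ᘁV) V).inv
      ≫ ((β_ (Vᘁ) (ᘁV)).hom ▷ V) ≫ (α_ (ᘁV) (Vᘁ) V).hom =
    (λ_ (Vᘁ)).inv ≫ (η_ (ᘁV) V ▷ (Vᘁ)) ≫ (α_ (ᘁV) V (Vᘁ)).hom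
      ≫ ((ᘁV) ◁ (β_ V (Vᘁ)).hom) := by
  have h := braiding_naturality_right (Vᘁ) (η_ (ᘁV) V)
  rw [braiding_tensor_right_hom, braiding_tensorUnit_right] at h
  rw [SymmetricCategory.braiding_swap_eq_inv_braiding (X := Vᘁ) (Y := V),
    ← cancel_mono ((ᘁV) ◁ (β_ (Vᘁ) V).hom), ← cancel_mono ((α_ (ᘁV) V (Vᘁ)).inv)]
  simp only [Category.assoc] at h ⊢
  rw [h]
  simp

lemma sovereign_ev (θ : ∀ X : C, X ⟶ X) (V : C) :
    (V ◁ sovereignOfTwist θ V) ≫ ε_ (ᘁV) V =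
      (β_ V (Vᘁ)).hom ≫ ((Vᘁ) ◁ θ V) ≫ ε_ V (Vᘁ) := by
  calc
    _ = 𝟙 _ ⊗≫ (V ◁ ((ρ_ (Vᘁ)).inv ≫ ((Vᘁ) ◁ η_ (ᘁV) V) ≫ (α_ (Vᘁ) (ᘁV) V).inv
          ≫ ((β_ (Vᘁ) (ᘁV)).hom ▷ V) ≫ (α_ (ᘁV) (Vᘁ) V).hom))
        ⊗≫ ((V ⊗ ᘁV) ◁ (((Vᘁ) ◁ θ V) ≫ ε_ V (Vᘁ)) ≫ ε_ (ᘁV) V ▷ 𝟙_ C) ⊗≫ 𝟙 _ := by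
      simp only [sovereignOfTwist]
      rw [← SymmetricCategory.braiding_swap_eq_inv_braiding]; monoidal
    _ = 𝟙 _ ⊗≫ (V ◁ ((ρ_ (Vᘁ)).inv ≫ ((Vᘁ) ◁ η_ (ᘁV) V) ≫ (α_ (Vᘁ) (ᘁV) V).inv
          ≫ ((β_ (Vᘁ) (ᘁV)).hom ▷ V) ≫ (α_ (ᘁV) (Vᘁ) V).hom))
        ⊗≫ (ε_ (ᘁV) V ▷ ((Vᘁ) ⊗ V)) ⊗≫ (((Vᘁ) ◁ θ V) ≫ ε_ V (Vᘁ)) := by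
      rw [whisker_exchange]; monoidal
    _ = 𝟙 _ ⊗≫ (V ◁ ((λ_ (Vᘁ)).inv ≫ (η_ (ᘁV) V ▷ (Vᘁ)) ≫ (α_ (ᘁV) V (Vᘁ)).hom
          ≫ ((ᘁV) ◁ (β_ V (Vᘁ)).hom)))
        ⊗≫ (ε_ (ᘁV) V ▷ ((Vᘁ) ⊗ V)) ⊗≫ (((Vᘁ) ◁ θ V) ≫ ε_ V (Vᘁ)) := by
      rw [coev_slide]
    _ = 𝟙 _ ⊗≫ (V ◁ ((λ_ (Vᘁ)).inv ≫ (η_ (ᘁV) V ▷ (Vᘁ))))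
        ⊗≫ ((V ⊗ ᘁV) ◁ (β_ V (Vᘁ)).hom ≫ ε_ (ᘁV) V ▷ ((Vᘁ) ⊗ V))
        ⊗≫ (((Vᘁ) ◁ θ V) ≫ ε_ V (Vᘁ)) := by
      monoidal
    _ = 𝟙 _ ⊗≫ ((V ◁ η_ ((ᘁV) : C) V ≫ (α_ V ((ᘁV) : C) V).inv ≫ ε_ ((ᘁV) : C) V ▷ V) ▷ (Vᘁ))
        ⊗≫ ((β_ V (Vᘁ)).hom ≫ ((Vᘁ) ◁ θ V) ≫ ε_ V (Vᘁ)) := by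
      rw [whisker_exchange]; monoidal
    _ = _ := by
      rw [ExactPairing.coevaluation_evaluation]; monoidal

-- cap slide 1 : (d,e-crossing then r(v,e)-cap) = (v,d-crossing then r(v,e)-cap)
lemma cap_slide1 (V : C) :
    (V ◁ (β_ (Vᘁ) (Vᘁ)).hom) ≫ (α_ V (Vᘁ) (Vᘁ)).inv
      ≫ (((β_ V (Vᘁ)).hom ≫ ε_ V (Vᘁ)) ▷ (Vᘁ)) ≫ (λ_ (Vᘁ)).hom =
    (α_ V (Vᘁ) (Vᘁ)).inv ≫ ((β_ V (Vᘁ)).hom ▷ (Vᘁ)) ≫ (α_ (Vᘁ) V (Vᘁ)).hom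
      ≫ ((Vᘁ) ◁ ((β_ V (Vᘁ)).hom ≫ ε_ V (Vᘁ))) ≫ (ρ_ (Vᘁ)).hom := by
  -- RHS prefix is β_{V, Vᘁ⊗Vᘁ} decomposed
  have hR : (α_ V (Vᘁ) (Vᘁ)).inv ≫ ((β_ V (Vᘁ)).hom ▷ (Vᘁ)) ≫ (α_ (Vᘁ) V (Vᘁ)).hom
      ≫ ((Vᘁ) ◁ (β_ V (Vᘁ)).hom) =
      (β_ V ((Vᘁ) ⊗ (Vᘁ))).hom ≫ (α_ (Vᘁ) (Vᘁ) V).hom := by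
    rw [braiding_tensor_right_hom]; simp
  -- LHS: complete the block braiding
  have hL : (V ◁ (β_ (Vᘁ) (Vᘁ)).hom) ≫ (β_ V ((Vᘁ) ⊗ (Vᘁ))).hom =
      (β_ V ((Vᘁ) ⊗ (Vᘁ))).hom ≫ ((β_ (Vᘁ) (Vᘁ)).hom ▷ V) :=
    braiding_naturality_right V (β_ (Vᘁ) (Vᘁ)).hom
  -- the small cap-slide : strand crossing both legs of the r-cap slides off
  have hS : ((β_ (Vᘁ) (Vᘁ)).hom ▷ V) ≫ (α_ (Vᘁ) (Vᘁ) V).hom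
      ≫ ((Vᘁ) ◁ (β_ (Vᘁ) V).hom) ≫ (α_ (Vᘁ) V (Vᘁ)).inv
      ≫ (ε_ V (Vᘁ) ▷ (Vᘁ)) ≫ (λ_ (Vᘁ)).hom =
      (α_ (Vᘁ) (Vᘁ) V).hom ≫ ((Vᘁ) ◁ ε_ V (Vᘁ)) ≫ (ρ_ (Vᘁ)).hom := by
    have h2 := braiding_naturality_right (Vᘁ) (ε_ V (Vᘁ))
    rw [braiding_tensorUnit_right] at h2
    have h3 := braiding_tensor_right_hom (Vᘁ) (Vᘁ) V
    calc
      _ = (α_ (Vᘁ) (Vᘁ) V).hom ≫ ((α_ (Vᘁ) (Vᘁ) V).inv ≫ ((β_ (Vᘁ) (Vᘁ)).hom ▷ V)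
            ≫ (α_ (Vᘁ) (Vᘁ) V).hom ≫ ((Vᘁ) ◁ (β_ (Vᘁ) V).hom) ≫ (α_ (Vᘁ) V (Vᘁ)).inv)
            ≫ (ε_ V (Vᘁ) ▷ (Vᘁ)) ≫ (λ_ (Vᘁ)).hom := by simp
      _ = (α_ (Vᘁ) (Vᘁ) V).hom ≫ (β_ (Vᘁ) ((Vᘁ) ⊗ V)).hom ≫ (ε_ V (Vᘁ) ▷ (Vᘁ))
            ≫ (λ_ (Vᘁ)).hom := by rw [← h3]
      _ = (α_ (Vᘁ) (Vᘁ) V).hom ≫ ((Vᘁ) ◁ ε_ V (Vᘁ)) ≫ (β_ (Vᘁ) (𝟙_ C)).hom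
            ≫ (λ_ (Vᘁ)).hom := by
          rw [← braiding_naturality_right_assoc]
      _ = _ := by rw [braiding_tensorUnit_right]; simp
  calc
    _ = (V ◁ (β_ (Vᘁ) (Vᘁ)).hom) ≫ ((α_ V (Vᘁ) (Vᘁ)).inv ≫ ((β_ V (Vᘁ)).hom ▷ (Vᘁ))
          ≫ (α_ (Vᘁ) V (Vᘁ)).hom ≫ ((Vᘁ) ◁ (β_ V (Vᘁ)).hom))
          ≫ ((Vᘁ) ◁ (β_ V (Vᘁ)).inv) ≫ (α_ (Vᘁ) V (Vᘁ)).inv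
          ≫ (ε_ V (Vᘁ) ▷ (Vᘁ)) ≫ (λ_ (Vᘁ)).hom := by
        simp
    _ = (V ◁ (β_ (Vᘁ) (Vᘁ)).hom) ≫ ((β_ V ((Vᘁ) ⊗ (Vᘁ))).hom ≫ (α_ (Vᘁ) (Vᘁ) V).hom)
          ≫ ((Vᘁ) ◁ (β_ V (Vᘁ)).inv) ≫ (α_ (Vᘁ) V (Vᘁ)).inv
          ≫ (ε_ V (Vᘁ) ▷ (Vᘁ)) ≫ (λ_ (Vᘁ)).hom := by rw [hR]
    _ = (β_ V ((Vᘁ) ⊗ (Vᘁ))).hom ≫ ((β_ (Vᘁ) (Vᘁ)).hom ▷ V) ≫ (α_ (Vᘁ) (Vᘁ) V).hom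
          ≫ ((Vᘁ) ◁ (β_ (Vᘁ) V).hom) ≫ (α_ (Vᘁ) V (Vᘁ)).inv
          ≫ (ε_ V (Vᘁ) ▷ (Vᘁ)) ≫ (λ_ (Vᘁ)).hom := by
        simp only [Category.assoc]
        rw [reassoc_of% hL, ← SymmetricCategory.braiding_swap_eq_inv_braiding]
    _ = (β_ V ((Vᘁ) ⊗ (Vᘁ))).hom ≫ (α_ (Vᘁ) (Vᘁ) V).hom ≫ ((Vᘁ) ◁ ε_ V (Vᘁ))
          ≫ (ρ_ (Vᘁ)).hom := by rw [hS]
    _ = _ := by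
        rw [← reassoc_of% hR]; simp

def contractP (V : C) : (V ⊗ (Vᘁ)) ⊗ (V ⊗ (Vᘁ)) ⟶ 𝟙_ C :=
  (α_ V (Vᘁ) (V ⊗ (Vᘁ))).hom
    ≫ (V ◁ ((α_ (Vᘁ) V (Vᘁ)).inv ≫ (ε_ V (Vᘁ) ▷ (Vᘁ)) ≫ (λ_ (Vᘁ)).hom))
    ≫ (β_ V (Vᘁ)).hom ≫ ε_ V (Vᘁ)

lemma contractP_braid (V : C) :
    (β_ (V ⊗ (Vᘁ)) (V ⊗ (Vᘁ))).hom ≫ contractP V = contractP V := by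
  calc
    _ = 𝟙 _ ⊗≫ (V ◁ ((β_ (Vᘁ) V).hom ▷ (Vᘁ)))
        ⊗≫ (((V ⊗ V) ◁ (β_ (Vᘁ) (Vᘁ)).hom) ≫ ((β_ V V).hom ▷ ((Vᘁ) ⊗ (Vᘁ))))
        ⊗≫ (V ◁ ((β_ V (Vᘁ)).hom ▷ (Vᘁ))) ⊗≫ (V ◁ (ε_ V (Vᘁ) ▷ (Vᘁ)))
        ⊗≫ ((β_ V (Vᘁ)).hom ≫ ε_ V (Vᘁ)) := by
      simp only [contractP]
      rw [braiding_tensor_left_hom V (Vᘁ) (V ⊗ (Vᘁ)), braiding_tensor_right_hom (Vᘁ) V (Vᘁ),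
        braiding_tensor_right_hom V V (Vᘁ)]
      monoidal
    _ = 𝟙 _ ⊗≫ (V ◁ ((β_ (Vᘁ) V).hom ▷ (Vᘁ)))
        ⊗≫ (((β_ V V).hom ▷ ((Vᘁ) ⊗ (Vᘁ))) ≫ ((V ⊗ V) ◁ (β_ (Vᘁ) (Vᘁ)).hom))
        ⊗≫ (V ◁ ((β_ V (Vᘁ)).hom ▷ (Vᘁ))) ⊗≫ (V ◁ (ε_ V (Vᘁ) ▷ (Vᘁ)))
        ⊗≫ ((β_ V (Vᘁ)).hom ≫ ε_ V (Vᘁ)) := by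
      rw [whisker_exchange]
    _ = 𝟙 _ ⊗≫ (V ◁ ((β_ (Vᘁ) V).hom ▷ (Vᘁ))) ⊗≫ ((β_ V V).hom ▷ ((Vᘁ) ⊗ (Vᘁ)))
        ⊗≫ (V ◁ ((V ◁ (β_ (Vᘁ) (Vᘁ)).hom) ≫ (α_ V (Vᘁ) (Vᘁ)).inv
          ≫ (((β_ V (Vᘁ)).hom ≫ ε_ V (Vᘁ)) ▷ (Vᘁ)) ≫ (λ_ (Vᘁ)).hom))
        ⊗≫ ((β_ V (Vᘁ)).hom ≫ ε_ V (Vᘁ)) := by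
      monoidal
    _ = 𝟙 _ ⊗≫ (V ◁ ((β_ (Vᘁ) V).hom ▷ (Vᘁ))) ⊗≫ ((β_ V V).hom ▷ ((Vᘁ) ⊗ (Vᘁ)))
        ⊗≫ (V ◁ ((α_ V (Vᘁ) (Vᘁ)).inv ≫ ((β_ V (Vᘁ)).hom ▷ (Vᘁ)) ≫ (α_ (Vᘁ) V (Vᘁ)).hom
          ≫ ((Vᘁ) ◁ ((β_ V (Vᘁ)).hom ≫ ε_ V (Vᘁ))) ≫ (ρ_ (Vᘁ)).hom))
        ⊗≫ ((β_ V (Vᘁ)).hom ≫ ε_ V (Vᘁ)) := by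
      rw [cap_slide1]
    _ = 𝟙 _ ⊗≫ (V ◁ ((β_ (Vᘁ) V).hom ▷ (Vᘁ))) ⊗≫ ((β_ V V).hom ▷ ((Vᘁ) ⊗ (Vᘁ)))
        ⊗≫ (V ◁ ((β_ V (Vᘁ)).hom ▷ (Vᘁ)))
        ⊗≫ (((V ⊗ (Vᘁ)) ◁ ((β_ V (Vᘁ)).hom ≫ ε_ V (Vᘁ)))
          ≫ (((β_ V (Vᘁ)).hom ≫ ε_ V (Vᘁ)) ▷ 𝟙_ C)) ⊗≫ 𝟙 _ := by
      monoidal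
    _ = 𝟙 _ ⊗≫ (V ◁ ((β_ (Vᘁ) V).hom ▷ (Vᘁ))) ⊗≫ ((β_ V (V ⊗ (Vᘁ))).hom ▷ (Vᘁ))
        ⊗≫ ((((β_ V (Vᘁ)).hom ≫ ε_ V (Vᘁ)) ▷ V) ▷ (Vᘁ))
        ⊗≫ ((β_ V (Vᘁ)).hom ≫ ε_ V (Vᘁ)) := by
      rw [whisker_exchange, braiding_tensor_right_hom]; monoidal
    _ = 𝟙 _ ⊗≫ (V ◁ ((β_ (Vᘁ) V).hom ▷ (Vᘁ)))
        ⊗≫ (((β_ V (V ⊗ (Vᘁ))).hom ≫ (((β_ V (Vᘁ)).hom ≫ ε_ V (Vᘁ)) ▷ V)) ▷ (Vᘁ))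
        ⊗≫ ((β_ V (Vᘁ)).hom ≫ ε_ V (Vᘁ)) := by
      monoidal
    _ = 𝟙 _ ⊗≫ (V ◁ ((β_ (Vᘁ) V).hom ▷ (Vᘁ)))
        ⊗≫ (((V ◁ ((β_ V (Vᘁ)).hom ≫ ε_ V (Vᘁ))) ≫ (β_ V (𝟙_ C)).hom) ▷ (Vᘁ))
        ⊗≫ ((β_ V (Vᘁ)).hom ≫ ε_ V (Vᘁ)) := by
      rw [← braiding_naturality_right]
    _ = 𝟙 _ ⊗≫ (V ◁ (((β_ (Vᘁ) V).hom ≫ (β_ V (Vᘁ)).hom ≫ ε_ V (Vᘁ)) ▷ (Vᘁ)))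
        ⊗≫ ((β_ V (Vᘁ)).hom ≫ ε_ V (Vᘁ)) := by
      rw [braiding_tensorUnit_right]; monoidal
    _ = 𝟙 _ ⊗≫ (V ◁ (ε_ V (Vᘁ) ▷ (Vᘁ)))
        ⊗≫ ((β_ V (Vᘁ)).hom ≫ ε_ V (Vᘁ)) := by
      rw [SymmetricCategory.symmetry_assoc]
    _ = contractP V := by
      simp only [contractP]; monoidal

def hatm {X V : C} (A : X ⊗ V ⟶ V) : X ⟶ V ⊗ (Vᘁ) :=
  (ρ_ X).inv ≫ (X ◁ η_ V (Vᘁ)) ≫ (α_ X V (Vᘁ)).inv ≫ (A ▷ (Vᘁ))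

def tr0 {Z V : C} (F : Z ⊗ V ⟶ V) : Z ⟶ 𝟙_ C :=
  (ρ_ Z).inv ≫ (Z ◁ η_ V (Vᘁ)) ≫ (α_ Z V (Vᘁ)).inv ≫ (F ▷ (Vᘁ))
    ≫ (β_ V (Vᘁ)).hom ≫ ε_ V (Vᘁ)

lemma hat_invert {X V : C} (A : X ⊗ V ⟶ V) :
    (hatm A ▷ V) ≫ (α_ V (Vᘁ) V).hom ≫ (V ◁ ε_ V (Vᘁ)) ≫ (ρ_ V).hom = A := by
  calc
    _ = 𝟙 _ ⊗≫ (X ◁ η_ V (Vᘁ) ▷ V) ⊗≫ (A ▷ ((Vᘁ) ⊗ V) ≫ V ◁ ε_ V (Vᘁ)) ⊗≫ 𝟙 _ := by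
      simp only [hatm]; monoidal
    _ = 𝟙 _ ⊗≫ X ◁ (η_ V (Vᘁ) ▷ V ⊗≫ V ◁ ε_ V (Vᘁ)) ⊗≫ A := by
      rw [← whisker_exchange]; monoidal
    _ = A := by
      rw [ExactPairing.evaluation_coevaluation'']; monoidal

lemma zig {X V : C} (A : X ⊗ V ⟶ V) :
    (hatm A ▷ (V ⊗ (Vᘁ))) ≫ contractP V =
      (α_ X V (Vᘁ)).inv ≫ (A ▷ (Vᘁ)) ≫ (β_ V (Vᘁ)).hom ≫ ε_ V (Vᘁ) := by
  calc
    _ = (α_ X V (Vᘁ)).inv ≫ (((hatm A ▷ V) ≫ (α_ V (Vᘁ) V).hom ≫ (V ◁ ε_ V (Vᘁ))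
          ≫ (ρ_ V).hom) ▷ (Vᘁ)) ≫ (β_ V (Vᘁ)).hom ≫ ε_ V (Vᘁ) := by
      simp only [contractP]; monoidal
    _ = _ := by rw [hat_invert]

lemma H1 {X Y V : C} (A : X ⊗ V ⟶ V) (B : Y ⊗ V ⟶ V) :
    tr0 ((α_ X Y V).hom ≫ (X ◁ B) ≫ A) = (hatm A ⊗ₘ hatm B) ≫ contractP V := by
  calc
    tr0 ((α_ X Y V).hom ≫ (X ◁ B) ≫ A)
      = (X ◁ hatm B) ≫ (α_ X V (Vᘁ)).inv ≫ (A ▷ (Vᘁ))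
          ≫ (β_ V (Vᘁ)).hom ≫ ε_ V (Vᘁ) := by
        simp only [tr0, hatm]; monoidal
    _ = (X ◁ hatm B) ≫ (hatm A ▷ (V ⊗ (Vᘁ))) ≫ contractP V := by rw [zig]
    _ = _ := by rw [tensorHom_def']; simp

lemma killing_eq_tr0 (θ : ∀ X : C, X ⟶ X)
    (hθnat : ∀ {X Y : C} (g : X ⟶ Y), g ≫ θ Y = θ X ≫ g)
    (hθone : θ (𝟙_ C) = 𝟙 (𝟙_ C))
    (hθtensor : ∀ X Y : C, θ (X ⊗ Y) = (β_ X Y).hom ≫ (β_ Y X).hom ≫ (θ X ⊗ₘ θ Y))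
    (hθdual : ∀ X : C, θ (Xᘁ) = (θ X)ᘁ)
    (L : C) (ℓ : L ⊗ L ⟶ L) :
    catKillingForm θ ℓ = tr0 ((α_ L L L).hom ≫ (L ◁ ℓ) ≫ ℓ) := by
  have hsq := theta_sq θ hθnat hθone hθtensor hθdual L
  have h2 : θ L ▷ (Lᘁ) ≫ θ L ▷ (Lᘁ) = 𝟙 _ := by
    rw [← comp_whiskerRight, hsq, id_whiskerRight]
  simp only [catKillingForm, partialTrace, tr0, Category.assoc]
  rw [sovereign_ev]
  rw [← braiding_naturality_left_assoc]
  simp only [comp_whiskerRight, Category.assoc]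
  rw [reassoc_of% h2]

end KillingAux

/-- The Killing form of a Lie algebra in an additive symmetric ribbon
category is symmetric: `κ = κ ∘ c_{L,L}`. -/
theorem catKillingForm_symmetric (θ : ∀ X : C, X ⟶ X)
    (hθiso : ∀ X, IsIso (θ X))
    (hθnat : ∀ {X Y : C} (g : X ⟶ Y), g ≫ θ Y = θ X ≫ g)
    (hθone : θ (𝟙_ C) = 𝟙 (𝟙_ C))
    (hθtensor : ∀ X Y : C, θ (X ⊗ Y) = (β_ X Y).hom ≫ (β_ Y X).hom ≫ (θ X ⊗ₘ θ Y))
    (hθdual : ∀ X : C, θ (Xᘁ) = (θ X)ᘁ)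
    (L : C) (ℓ : L ⊗ L ⟶ L)
    (hanti : (𝟙 (L ⊗ L) + (β_ L L).hom) ≫ ℓ = 0)
    (hjac : (𝟙 (L ⊗ (L ⊗ L)) + ((α_ L L L).inv ≫ (β_ (L ⊗ L) L).hom)
        + ((α_ L L L).inv ≫ (β_ (L ⊗ L) L).hom) ≫ ((α_ L L L).inv ≫ (β_ (L ⊗ L) L).hom))
        ≫ ((L ◁ ℓ) ≫ ℓ) = 0) :
    catKillingForm θ ℓ = (β_ L L).hom ≫ catKillingForm θ ℓ := by
  rw [killing_eq_tr0 θ hθnat hθone hθtensor hθdual L ℓ, H1 ℓ ℓ,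
    ← BraidedCategory.braiding_naturality_assoc (hatm ℓ) (hatm ℓ), contractP_braid]
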